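/- Let s₋, s₊ : ℂ → R be (not necessarily unital) ℂ-algebra homomorphisms, set p := s₋(1) (which is an idempotent, since s₋ is multiplicative) and s := s₊(1), and let U := U_{π/2} be the rotation built from p. Then the maps t₋, t₊ : ℂ → M₂(R) defined by t₋(λ) := U · diag(s₋(λ), λ·p^⊥) · U^{−1} and t₊(λ) := U · diag(s₊(λ), λ·p^⊥) · U^{−1} are (not necessarily unital) ℂ-algebra homomorphisms; one has t₋(λ) = diag(0, λ·1) for all λ ∈ ℂ, and t₊(λ) = λ · [[p^⊥·s·p^⊥, −p^⊥·s·p], [−p·s·p^⊥, p·s·p + p^⊥]]. Moreover, if J is a two-sided ideal of R such that s₊(λ) − s₋(λ) ∈ J for all λ ∈ ℂ, then every entry of the matrix t₊(λ) − t₋(λ) lies in J. (This is the algebraic core of the standard form of level-one K-theory elements.) -/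

import Mathlib

/-- The rotation operator `U_t` in `M₂(R)` built from an idempotent `p` of a
unital associative `ℂ`-algebra `R`:
`U_t = [[cos t · p + p^⊥, sin t · p], [− sin t · p, cos t · p + p^⊥]]`
where `p^⊥ = 1 − p`. -/
noncomputable def Umat {R : Type*} [Ring R] [Algebra ℂ R] (p : R) (t : ℝ) :
    Matrix (Fin 2) (Fin 2) R :=
  !![(Real.cos t : ℂ) • p + (1 - p), (Real.sin t : ℂ) • p;
     -((Real.sin t : ℂ) • p), (Real.cos t : ℂ) • p + (1 - p)]

/-- `t₋(λ) = U_{π/2} · diag(s₋(λ), λ·p^⊥) · U_{−π/2}` where `p = s₋(1)`. -/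
noncomputable def tMinus {R : Type*} [Ring R] [Algebra ℂ R]
    (sm : ℂ →ₙₐ[ℂ] R) (lam : ℂ) : Matrix (Fin 2) (Fin 2) R :=
  Umat (sm 1) (Real.pi / 2) * !![sm lam, 0; 0, lam • (1 - sm 1)] *
    Umat (sm 1) (-(Real.pi / 2))

/-- `t₊(λ) = U_{π/2} · diag(s₊(λ), λ·p^⊥) · U_{−π/2}` where `p = s₋(1)`. -/
noncomputable def tPlus {R : Type*} [Ring R] [Algebra ℂ R]
    (sm sp : ℂ →ₙₐ[ℂ] R) (lam : ℂ) : Matrix (Fin 2) (Fin 2) R :=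
  Umat (sm 1) (Real.pi / 2) * !![sp lam, 0; 0, lam • (1 - sm 1)] *
    Umat (sm 1) (-(Real.pi / 2))

section aux

variable {R : Type*} [Ring R] [Algebra ℂ R]

lemma Umat_pos (p : R) : Umat p (Real.pi/2) = !![1-p, p; -p, 1-p] := by
  simp [Umat, Real.cos_pi_div_two, Real.sin_pi_div_two]

lemma Umat_neg (p : R) : Umat p (-(Real.pi/2)) = !![1-p, -p; p, 1-p] := by
  simp [Umat, Real.cos_pi_div_two, Real.sin_pi_div_two]

lemma conj_lemma (p a : R) (hp : p*p = p) (lam : ℂ) :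
    !![1-p,p;-p,1-p] * !![a,0;0,lam•(1-p)] * !![(1:R)-p,-p;p,1-p] =
    !![(1-p)*a*(1-p), -((1-p)*a*p); -(p*a*(1-p)), p*a*p + lam•(1-p)] := by
  ext i j
  fin_cases i <;> fin_cases j <;>
    simp [Matrix.mul_apply, Fin.sum_univ_two, mul_smul_comm, smul_mul_assoc,
      mul_sub, sub_mul, hp] <;> abel

lemma VU_one (p : R) (hp : p*p = p) :
    !![(1:R)-p,-p;p,1-p] * !![1-p,p;-p,1-p] = 1 := by
  ext i j
  fin_cases i <;> fin_cases j <;>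
    simp [Matrix.mul_apply, Fin.sum_univ_two, Matrix.one_apply,
      mul_sub, sub_mul, hp] <;> abel

lemma hom_smul_one (s : ℂ →ₙₐ[ℂ] R) (lam : ℂ) : s lam = lam • s 1 := by
  have := map_smul s lam 1
  simpa using this

lemma hom_idem (s : ℂ →ₙₐ[ℂ] R) : s 1 * s 1 = s 1 := by
  have := map_mul s 1 1
  simpa using this.symm

end aux

/-- Let `s₋, s₊ : ℂ → R` be (not necessarily unital) `ℂ`-algebra homomorphisms,
`p := s₋(1)`, `s := s₊(1)`, `U := U_{π/2}`.  Then `t₋, t₊ : ℂ → M₂(R)` defined by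
`t₋(λ) := U · diag(s₋(λ), λ·p^⊥) · U⁻¹` and `t₊(λ) := U · diag(s₊(λ), λ·p^⊥) · U⁻¹`
are (not necessarily unital) `ℂ`-algebra homomorphisms; `t₋(λ) = diag(0, λ·1)`,
and `t₊(λ) = λ · [[p^⊥·s·p^⊥, −p^⊥·s·p], [−p·s·p^⊥, p·s·p + p^⊥]]`.
If moreover `J` is a two-sided ideal of `R` with `s₊(λ) − s₋(λ) ∈ J` for all `λ`,
then every entry of `t₊(λ) − t₋(λ)` lies in `J`. -/
theorem stmt3 {R : Type*} [Ring R] [Algebra ℂ R] (sm sp : ℂ →ₙₐ[ℂ] R) :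
    (∀ x y : ℂ, tMinus sm (x + y) = tMinus sm x + tMinus sm y) ∧
    (∀ x y : ℂ, tMinus sm (x * y) = tMinus sm x * tMinus sm y) ∧
    (∀ (c x : ℂ), tMinus sm (c • x) = c • tMinus sm x) ∧
    (∀ x y : ℂ, tPlus sm sp (x + y) = tPlus sm sp x + tPlus sm sp y) ∧
    (∀ x y : ℂ, tPlus sm sp (x * y) = tPlus sm sp x * tPlus sm sp y) ∧
    (∀ (c x : ℂ), tPlus sm sp (c • x) = c • tPlus sm sp x) ∧
    (∀ lam : ℂ, tMinus sm lam = !![0, 0; 0, lam • (1 : R)]) ∧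
    (∀ lam : ℂ,
      tPlus sm sp lam =
        lam • !![(1 - sm 1) * sp 1 * (1 - sm 1), -((1 - sm 1) * sp 1 * sm 1);
                 -(sm 1 * sp 1 * (1 - sm 1)), sm 1 * sp 1 * sm 1 + (1 - sm 1)]) ∧
    (∀ J : TwoSidedIdeal R, (∀ lam : ℂ, sp lam - sm lam ∈ J) →
      ∀ (lam : ℂ) (i j : Fin 2), (tPlus sm sp lam - tMinus sm lam) i j ∈ J) := by
  set p := sm 1 with hpdef
  have hp : p * p = p := hom_idem sm
  -- explicit form of tMinus
  have hM : ∀ lam : ℂ, tMinus sm lam = !![0, 0; 0, lam • (1 : R)] := by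
    intro lam
    rw [tMinus, Umat_pos, Umat_neg, conj_lemma p (sm lam) hp lam,
      hom_smul_one sm lam]
    ext i j
    fin_cases i <;> fin_cases j <;>
      simp [mul_smul_comm, smul_mul_assoc, mul_sub, sub_mul, hp, ← smul_add, ← hpdef]
  -- explicit form of tPlus
  have hP : ∀ lam : ℂ,
      tPlus sm sp lam =
        lam • !![(1 - p) * sp 1 * (1 - p), -((1 - p) * sp 1 * p);
                 -(p * sp 1 * (1 - p)), p * sp 1 * p + (1 - p)] := by
    intro lam
    rw [tPlus, Umat_pos, Umat_neg, conj_lemma p (sp lam) hp lam,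
      hom_smul_one sp lam]
    ext i j
    fin_cases i <;> fin_cases j <;>
      simp [mul_smul_comm, smul_mul_assoc, smul_add, smul_sub]
  -- multiplicativity via V*U = 1
  have hmulP : ∀ x y : ℂ, tPlus sm sp (x * y) = tPlus sm sp x * tPlus sm sp y := by
    intro x y
    have h1 : tPlus sm sp x * tPlus sm sp y =
        Umat p (Real.pi/2) *
          (!![sp x, 0; 0, x • (1 - p)] *
            ((Umat p (-(Real.pi/2)) * Umat p (Real.pi/2)) *
              (!![sp y, 0; 0, y • (1 - p)] * Umat p (-(Real.pi/2))))) := by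
      simp only [tPlus, Matrix.mul_assoc, ← hpdef]
    rw [h1, Umat_pos, Umat_neg, VU_one p hp, one_mul]
    have hD : !![sp x, 0; 0, x • ((1:R) - p)] * !![sp y, 0; 0, y • (1 - p)] =
        !![sp (x*y), 0; 0, (x*y) • (1 - p)] := by
      ext i j
      fin_cases i <;> fin_cases j <;>
        simp [Matrix.mul_apply, Fin.sum_univ_two, map_mul, smul_smul,
          mul_smul_comm, smul_mul_assoc, mul_sub, sub_mul, hp, mul_comm y x]
    rw [tPlus, Umat_pos, Umat_neg, Matrix.mul_assoc, ← hD]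
    simp only [Matrix.mul_assoc, ← hpdef]
  refine ⟨?_, ?_, ?_, ?_, hmulP, ?_, hM, hP, ?_⟩
  · intro x y
    simp only [hM]
    ext i j
    fin_cases i <;> fin_cases j <;> simp [add_smul]
  · intro x y
    simp only [hM]
    ext i j
    fin_cases i <;> fin_cases j <;>
      simp [Matrix.mul_apply, Fin.sum_univ_two, smul_smul, mul_smul_comm,
        smul_mul_assoc, mul_comm x y]
  · intro c x
    simp only [hM]
    ext i j
    fin_cases i <;> fin_cases j <;> simp [smul_smul]
  · intro x y
    simp only [hP, add_smul]
  · intro c x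
    simp only [hP, smul_smul, smul_eq_mul]
  · intro J hJ lam i j
    have hdiff : tPlus sm sp lam - tMinus sm lam =
        !![1-p,p;-p,1-p] * !![sp lam - sm lam, 0; 0, 0] * !![(1:R)-p,-p;p,1-p] := by
      rw [tPlus, tMinus, Umat_pos, Umat_neg, ← Matrix.sub_mul, ← Matrix.mul_sub]
      congr 1
      congr 1
      ext a b
      fin_cases a <;> fin_cases b <;> simp
    rw [hdiff]
    have hd : sp lam - sm lam ∈ J := hJ lam
    fin_cases i <;> fin_cases j <;>
      simp [Matrix.mul_apply, Fin.sum_univ_two] <;>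
      first
        | exact J.mul_mem_right _ _ (J.mul_mem_left _ _ hd)
        | exact J.neg_mem _ (J.mul_mem_right _ _ (J.mul_mem_left _ _ hd))
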